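/- For every prime p \le \max_{k \ge 1} (2^k n - (k + 2^k - 3) 2^k - 3), there exists an arithmetical structure on K_n whose maximum value is p. -/

import Mathlib

/-- An arithmetical structure on `K n`. -/
def IsArithStruct (n : ℕ) (r : Fin n → ℕ) : Prop :=
  (∀ i, 0 < r i) ∧ Finset.univ.gcd r = 1 ∧ ∀ j, r j ∣ ∑ i, r i

namespace Stmt18Aux

/-- binary digit sum -/
def s2 (m : ℕ) : ℕ := (Nat.digits 2 m).sum

lemma s2_zero : s2 0 = 0 := by simp [s2]

lemma s2_eq (m : ℕ) (hm : 0 < m) : s2 m = m % 2 + s2 (m / 2) := by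
  unfold s2
  rw [Nat.digits_def' (by norm_num) hm]
  simp

lemma s2_pos (m : ℕ) (hm : 0 < m) : 0 < s2 m := by
  induction m using Nat.strong_induction_on with
  | _ m ih =>
    rw [s2_eq m hm]
    rcases Nat.eq_zero_or_pos (m % 2) with h | h
    · have h2 : 0 < m / 2 := by omega
      have := ih (m / 2) (by omega) h2
      omega
    · omega

lemma s2_lt_pow (k : ℕ) : ∀ m, m < 2 ^ k → s2 m ≤ k := by
  induction k with
  | zero => intro m hm; interval_cases m; simp [s2_zero]
  | succ k ih =>
    intro m hm
    have hp : (2:ℕ) ^ (k+1) = 2 * 2 ^ k := by ring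
    rcases Nat.eq_zero_or_pos m with rfl | hm0
    · simp [s2_zero]
    · rw [s2_eq m hm0]
      have h2 : m / 2 < 2 ^ k := by omega
      have := ih _ h2
      omega

lemma s2_lt_pred (k : ℕ) : ∀ m, m + 1 < 2 ^ k → s2 m + 1 ≤ k := by
  induction k with
  | zero => intro m hm; norm_num at hm
  | succ k ih =>
    intro m hm
    have hp : (2:ℕ) ^ (k+1) = 2 * 2 ^ k := by ring
    have hk0 : 0 < 2 ^ k := Nat.pow_pos (by norm_num)
    rcases Nat.eq_zero_or_pos m with rfl | hm0
    · simp [s2_zero]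
    · rw [s2_eq m hm0]
      rcases Nat.mod_two_eq_zero_or_one m with h | h
      · have h2 : m / 2 < 2 ^ k := by omega
        have := s2_lt_pow k _ h2
        omega
      · have h2 : m / 2 + 1 < 2 ^ k := by omega
        have := ih _ h2
        omega

lemma sum_map_two (l : List ℕ) : (l.map (2 * ·)).sum = 2 * l.sum := by
  induction l with
  | nil => simp
  | cons a l ih => simp [ih]; ring

lemma exists_binlist (m : ℕ) :
    ∃ l : List ℕ, l.length = s2 m ∧ (∀ x ∈ l, (∃ j, x = 2 ^ j) ∧ x ≤ m) ∧ l.sum = m := by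
  induction m using Nat.strong_induction_on with
  | _ m ih =>
    rcases Nat.eq_zero_or_pos m with rfl | hm0
    · exact ⟨[], by simp [s2_zero]⟩
    · obtain ⟨l', h1, h2, h3⟩ := ih (m / 2) (by omega)
      rcases Nat.mod_two_eq_zero_or_one m with h | h
      · refine ⟨l'.map (2 * ·), ?_, ?_, ?_⟩
        · rw [List.length_map, h1, s2_eq m hm0, h]; omega
        · intro x hx
          simp only [List.mem_map] at hx
          obtain ⟨y, hy, rfl⟩ := hx
          obtain ⟨⟨j, rfl⟩, hle⟩ := h2 y hy
          exact ⟨⟨j + 1, by ring⟩, by omega⟩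
        · rw [sum_map_two, h3]; omega
      · refine ⟨1 :: l'.map (2 * ·), ?_, ?_, ?_⟩
        · simp only [List.length_cons, List.length_map, h1]
          rw [s2_eq m hm0, h]; omega
        · intro x hx
          rcases List.mem_cons.mp hx with rfl | hx
          · exact ⟨⟨0, by norm_num⟩, hm0⟩
          · simp only [List.mem_map] at hx
            obtain ⟨y, hy, rfl⟩ := hx
            obtain ⟨⟨j, rfl⟩, hle⟩ := h2 y hy
            exact ⟨⟨j + 1, by ring⟩, by omega⟩
        · rw [List.sum_cons, sum_map_two, h3]; omega

lemma exists_powlist (c q rem : ℕ) (hrem : rem < 2 ^ c) :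
    ∀ t, q + s2 rem ≤ t → t ≤ 2 ^ c * q + rem →
      ∃ l : List ℕ, l.length = t ∧ (∀ x ∈ l, ∃ j ≤ c, x = 2 ^ j) ∧ l.sum = 2 ^ c * q + rem := by
  intro t ht htN
  induction t, ht using Nat.le_induction with
  | base =>
    obtain ⟨lb, hb1, hb2, hb3⟩ := exists_binlist rem
    refine ⟨List.replicate q (2 ^ c) ++ lb, ?_, ?_, ?_⟩
    · simp [hb1]
    · intro x hx
      rcases List.mem_append.mp hx with hx | hx
      · exact ⟨c, le_refl c, List.eq_of_mem_replicate hx⟩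
      · obtain ⟨⟨j, rfl⟩, hle⟩ := hb2 x hx
        refine ⟨j, ?_, rfl⟩
        by_contra hjc
        push_neg at hjc
        have : 2 ^ c < 2 ^ j := Nat.pow_lt_pow_right (by norm_num) hjc
        omega
    · simp [hb3, List.sum_replicate, mul_comm]
  | succ t ht ih =>
    have h1 : t ≤ 2 ^ c * q + rem := by omega
    obtain ⟨l, hl1, hl2, hl3⟩ := ih h1
    -- some element of l is > 1
    have hex : ∃ x ∈ l, x ≠ 1 := by
      by_contra hall
      push_neg at hall
      have : l = List.replicate l.length 1 := List.eq_replicate_of_mem (fun x hx => hall x hx)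
      rw [this, List.sum_replicate, smul_eq_mul, mul_one] at hl3
      omega
    obtain ⟨x, hxl, hx1⟩ := hex
    obtain ⟨j, hjc, rfl⟩ := hl2 x hxl
    have hj0 : j ≠ 0 := by rintro rfl; simp at hx1
    obtain ⟨j', rfl⟩ : ∃ j', j = j' + 1 := ⟨j - 1, by omega⟩
    obtain ⟨s, u, rfl⟩ := List.append_of_mem hxl
    refine ⟨s ++ 2 ^ j' :: 2 ^ j' :: u, ?_, ?_, ?_⟩
    · simp at hl1 ⊢; omega
    · intro x hx
      simp only [List.mem_append, List.mem_cons] at hx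
      rcases hx with hx | hx | hx | hx
      · exact hl2 x (by simp [hx])
      · exact ⟨j', by omega, hx⟩
      · exact ⟨j', by omega, hx⟩
      · exact hl2 x (by simp [hx])
    · simp only [List.sum_append, List.sum_cons] at hl3 ⊢
      have : 2 ^ j' + 2 ^ j' = 2 ^ (j' + 1) := by ring
      omega

theorem sum_univ_get' (L : List ℕ) : ∑ i : Fin L.length, L.get i = L.sum := by
  induction L with
  | nil => simp
  | cons a l ih =>
    have h := Fin.sum_univ_succ (n := l.length) (f := fun i => (a :: l).get i)
    simp at h
    simp only [List.sum_cons]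
    exact h

lemma of_list (n p : ℕ) (L : List ℕ) (hlen : L.length = n)
    (hpos : ∀ x ∈ L, 0 < x) (hle : ∀ x ∈ L, x ≤ p)
    (hdvd : ∀ x ∈ L, x ∣ L.sum)
    (hmem : p ∈ L) (x₀ : ℕ) (hx₀ : x₀ ∈ L) (hcop : Nat.gcd p x₀ = 1) :
    ∃ r : Fin n → ℕ, IsArithStruct n r ∧ (∀ i, r i ≤ p) ∧ ∃ i, r i = p := by
  subst hlen
  refine ⟨fun i => L.get i, ⟨fun i => hpos _ (L.get_mem _), ?_, ?_⟩,
    fun i => hle _ (L.get_mem _), ?_⟩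
  · obtain ⟨ip, hip⟩ := List.mem_iff_get.mp hmem
    obtain ⟨i0, hi0⟩ := List.mem_iff_get.mp hx₀
    have hd1 : Finset.univ.gcd (fun i => L.get i) ∣ p := by
      rw [← hip]; exact Finset.gcd_dvd (Finset.mem_univ ip)
    have hd2 : Finset.univ.gcd (fun i => L.get i) ∣ x₀ := by
      rw [← hi0]; exact Finset.gcd_dvd (Finset.mem_univ i0)
    have := Nat.dvd_gcd hd1 hd2
    rw [hcop] at this
    exact Nat.dvd_one.mp this
  · intro j
    rw [sum_univ_get']
    exact hdvd _ (L.get_mem _)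
  · obtain ⟨ip, hip⟩ := List.mem_iff_get.mp hmem
    exact ⟨ip, hip⟩

end Stmt18Aux

open Stmt18Aux in
theorem stmt_18 (n p : ℕ) (hp : Nat.Prime p)
    (hbound : ∃ k : ℕ, 0 < k ∧
      (p : ℤ) ≤ 2 ^ k * n - ((k : ℤ) + 2 ^ k - 3) * 2 ^ k - 3) :
    ∃ r : Fin n → ℕ, IsArithStruct n r ∧ (∀ i, r i ≤ p) ∧ (∃ i, r i = p) := by
  obtain ⟨k, hk, hb⟩ := hbound
  have hp2 := hp.two_le
  set P : ℕ := 2 ^ k with hP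
  have hP2 : 2 ≤ P := by
    rw [hP]
    calc (2:ℕ) = 2 ^ 1 := by norm_num
    _ ≤ 2 ^ k := Nat.pow_le_pow_right (by norm_num) hk
  have hbN : p + 3 + (k + P) * P ≤ P * (n + 3) := by
    have hcast : ((p : ℤ) + 3 + ((k : ℤ) + (P : ℤ)) * P) ≤ (P : ℤ) * ((n : ℤ) + 3) := by
      have hPZ : (P : ℤ) = 2 ^ k := by rw [hP]; push_cast; ring
      rw [hPZ]; linarith [hb]
    exact_mod_cast hcast
  -- if p = 2 then n ≥ 3
  have hn3 : p = 2 → 3 ≤ n := by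
    intro hpe
    by_contra hn
    push_neg at hn
    have h1 : P * (n + 3) ≤ P * 5 := Nat.mul_le_mul_left _ (by omega)
    have h2 : (1 + P) * P ≤ (k + P) * P := Nat.mul_le_mul_right _ (by omega)
    nlinarith [hbN, hpe]
  by_cases hcase : p + 1 ≤ n
  · -- small prime case: m copies of p and n - m ones
    set m : ℕ := if n % p = 0 then p else n % p with hm
    have hmodlt : n % p < p := Nat.mod_lt _ (by omega)
    have hm1 : 1 ≤ m := by rw [hm]; split_ifs with h <;> omega
    have hmp : m ≤ p := by rw [hm]; split_ifs with h <;> omega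
    have hdvdnm : p ∣ n - m := by
      rw [hm]; split_ifs with h
      · exact Nat.dvd_sub (Nat.dvd_of_mod_eq_zero h) dvd_rfl
      · have hmod := Nat.div_add_mod n p
        have : n - n % p = p * (n / p) := by omega
        rw [this]; exact Dvd.intro _ rfl
    apply of_list n p (List.replicate m p ++ List.replicate (n - m) 1) ?_ ?_ ?_ ?_ ?_ 1 ?_
      (Nat.gcd_one_right p)
    · simp; omega
    · intro x hx
      rcases List.mem_append.mp hx with hx | hx <;>
        rw [List.eq_of_mem_replicate hx] <;> omega
    · intro x hx
      rcases List.mem_append.mp hx with hx | hx <;>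
        rw [List.eq_of_mem_replicate hx] <;> omega
    · intro x hx
      have hsum : (List.replicate m p ++ List.replicate (n - m) 1).sum = m * p + (n - m) := by
        simp [List.sum_replicate]
      rw [hsum]
      rcases List.mem_append.mp hx with hx | hx <;> rw [List.eq_of_mem_replicate hx]
      · exact Nat.dvd_add (dvd_mul_left p m) hdvdnm
      · exact one_dvd _
    · exact List.mem_append.mpr (Or.inl (List.mem_replicate.mpr ⟨by omega, rfl⟩))
    · exact List.mem_append.mpr (Or.inr (List.mem_replicate.mpr ⟨by omega, rfl⟩))
  · -- large prime case
    push_neg at hcase  -- n < p + 1, i.e. n ≤ p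
    have hnp : n ≤ p := by omega
    have hp3 : 3 ≤ p := by
      rcases Nat.lt_or_ge p 3 with h | h
      · have : p = 2 := by omega
        have := hn3 this
        omega
      · exact h
    -- k + P ≤ n + 2
    have hMn : k + P ≤ n + 2 := by
      by_contra h
      push_neg at h
      have h1 : P * (n + 3) ≤ P * (k + P) := Nat.mul_le_mul_left _ (by omega)
      nlinarith [hbN]
    have hPp : P ≤ p := by
      rcases Nat.lt_or_ge k 2 with h | h
      · have : k = 1 := by omega
        rw [hP, this]; omega
      · omega
    obtain ⟨q, rem, hrem, hdm⟩ : ∃ q rem, rem < P ∧ P * q + rem = p :=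
      ⟨p / P, p % P, Nat.mod_lt _ (by omega), Nat.div_add_mod p P⟩
    -- key counting inequality
    have hkey : q + s2 rem + P ≤ n + 1 := by
      rcases Nat.lt_or_ge (rem + 1) P with hA | hA
      · -- rem + 1 < P : s2 rem + 1 ≤ k
        have hs := s2_lt_pred k rem (by rw [← hP]; omega)
        have h1 : P * (q + (k + P)) < P * (n + 3) := by
          have : P * q + P * (k + P) ≤ p + (k + P) * P := by
            have : P * (k + P) = (k + P) * P := mul_comm _ _
            omega
          calc P * (q + (k + P)) = P * q + P * (k + P) := by ring
            _ ≤ p + (k + P) * P := this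
            _ < P * (n + 3) := by omega
        have h2 : q + (k + P) < n + 3 := Nat.lt_of_mul_lt_mul_left h1
        omega
      · -- rem + 1 = P
        have hAe : rem + 1 = P := by omega
        have hs := s2_lt_pow k rem (by rw [← hP]; omega)
        have h1 : P * ((q + 1) + (k + P)) < P * (n + 3) := by
          have e1 : P * (q + 1) = p + 1 := by
            calc P * (q + 1) = P * q + P := by ring
              _ = p + 1 := by omega
          calc P * ((q + 1) + (k + P)) = P * (q + 1) + P * (k + P) := by ring
            _ = p + 1 + (k + P) * P := by rw [e1, mul_comm]
            _ < P * (n + 3) := by omega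
        have h2 : (q + 1) + (k + P) < n + 3 := Nat.lt_of_mul_lt_mul_left h1
        omega
    have hs2p : 0 < q + s2 rem := by
      rcases Nat.eq_zero_or_pos q with rfl | hq
      · have : rem = p := by omega
        have := s2_pos rem (by omega)
        omega
      · omega
    obtain ⟨t, hts⟩ : ∃ t, t + P = n + 1 := ⟨n + 1 - P, by omega⟩
    have ht1 : q + s2 rem ≤ t := by omega
    have ht2 : t ≤ 2 ^ k * q + rem := by rw [← hP]; omega
    obtain ⟨lp, hl1, hl2, hl3⟩ := exists_powlist k q rem (by rw [← hP]; omega) t ht1 ht2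
    rw [← hP, hdm] at hl3
    have hlpne : lp ≠ [] := by
      intro h; rw [h] at hl1; simp at hl1; omega
    obtain ⟨x₀, hx₀⟩ := List.exists_mem_of_ne_nil lp hlpne
    obtain ⟨j₀, hj₀, hx₀e⟩ := hl2 x₀ hx₀
    set L : List ℕ := List.replicate (P - 1) p ++ lp with hL
    have hsum : L.sum = P * p := by
      rw [hL, List.sum_append, List.sum_replicate, smul_eq_mul, hl3]
      have h' : P - 1 + 1 = P := by omega
      calc (P - 1) * p + p = (P - 1 + 1) * p := by ring
        _ = P * p := by rw [h']
    apply of_list n p L ?_ ?_ ?_ ?_ ?_ x₀ ?_ ?_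
    · rw [hL]; simp [hl1]; omega
    · intro x hx
      rcases List.mem_append.mp hx with hx | hx
      · rw [List.eq_of_mem_replicate hx]; omega
      · obtain ⟨j, hj, rfl⟩ := hl2 x hx
        exact Nat.pow_pos (by norm_num)
    · intro x hx
      rcases List.mem_append.mp hx with hx | hx
      · rw [List.eq_of_mem_replicate hx]
      · obtain ⟨j, hj, rfl⟩ := hl2 x hx
        calc (2:ℕ) ^ j ≤ 2 ^ k := Nat.pow_le_pow_right (by norm_num) hj
          _ = P := hP.symm
          _ ≤ p := hPp
    · intro x hx
      rw [hsum]
      rcases List.mem_append.mp hx with hx | hx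
      · rw [List.eq_of_mem_replicate hx]
        exact dvd_mul_left p P
      · obtain ⟨j, hj, rfl⟩ := hl2 x hx
        exact Dvd.dvd.mul_right (by rw [hP]; exact pow_dvd_pow 2 hj) p
    · exact List.mem_append.mpr (Or.inl (List.mem_replicate.mpr ⟨by omega, rfl⟩))
    · exact List.mem_append.mpr (Or.inr hx₀)
    · -- gcd p x₀ = 1
      rw [hx₀e]
      have hcop2 : Nat.Coprime p 2 := by
        rw [Nat.coprime_primes hp Nat.prime_two] at *
        · omega
      exact (hcop2.pow_right j₀)
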